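/- 𝒲_J is a subgroup of W, and ^J_*W = 𝒲_J. -/

import Mathlib

set_option linter.unnecessarySeqFocus false
set_option linter.unusedSectionVars false
set_option maxHeartbeats 1000000

namespace Stmt1Aux

open List

variable {W : Type*} [Group W]

open Classical in
noncomputable def ePerm (x : W) : Equiv.Perm (W × ℤˣ) where
  toFun p := (x * p.1 * x⁻¹, if p.1 = x then -p.2 else p.2)
  invFun p := (x⁻¹ * p.1 * x, if p.1 = x then -p.2 else p.2)
  left_inv p := by
    obtain ⟨t, ε⟩ := p
    have h1 : x * t * x⁻¹ = x ↔ t = x := by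
      constructor
      · intro h
        have := mul_right_cancel (b := x⁻¹) (by rw [h]; group : x * t * x⁻¹ = x * x * x⁻¹)
        exact mul_left_cancel this
      · intro h; rw [h]; group
    by_cases h : t = x <;> simp [h, h1] <;> group
  right_inv p := by
    obtain ⟨t, ε⟩ := p
    have h1 : x⁻¹ * t * x = x ↔ t = x := by
      constructor
      · intro h
        have := mul_right_cancel (b := x) (by rw [h]; group : x⁻¹ * t * x = x⁻¹ * x * x)
        exact mul_left_cancel this
      · intro h; rw [h]; group
    by_cases h : t = x <;> simp [h, h1] <;> group

open Classical in
lemma ePerm_apply (x : W) (t : W) (ε : ℤˣ) :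
    ePerm x (t, ε) = (x * t * x⁻¹, if t = x then -ε else ε) := rfl

section invol

variable {a b : W} (ha : a * a = 1) (hb : b * b = 1)

include ha hb

lemma inv_a : a⁻¹ = a := by rw [← mul_eq_one_iff_inv_eq]; exact ha

lemma ba_pow_mul (k : ℕ) : (b * a) ^ k * b = b * (a * b) ^ k := by
  induction k with
  | zero => simp
  | succ k ih =>
    calc (b * a) ^ (k + 1) * b = b * a * ((b * a) ^ k * b) := by
          rw [pow_succ' (b * a) k, mul_assoc]
      _ = b * a * (b * (a * b) ^ k) := by rw [ih]
      _ = b * ((a * b) * (a * b) ^ k) := by rw [mul_assoc, ← mul_assoc a b]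
      _ = b * (a * b) ^ (k + 1) := by rw [← pow_succ']

lemma conj_b_pow (k : ℕ) : ((a * b) ^ k)⁻¹ * b * (a * b) ^ k = b * (a * b) ^ (2 * k) := by
  have h1 : ((a * b) ^ k)⁻¹ = (b * a) ^ k := by
    rw [← inv_pow]
    congr 1
    rw [mul_inv_rev, inv_a ha hb, inv_a hb ha]
  rw [h1, ba_pow_mul ha hb, mul_assoc, ← pow_add, two_mul]

lemma conj_ab_pow (k : ℕ) : ((a * b) ^ k)⁻¹ * (a * b) * (a * b) ^ k = a * b := by
  rw [mul_assoc, ← pow_succ', pow_succ, ← mul_assoc, inv_mul_cancel, one_mul]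

lemma conj_bab_pow (k : ℕ) : ((a * b) ^ k)⁻¹ * (b * (a * b)) * (a * b) ^ k
    = b * (a * b) ^ (2 * k + 1) := by
  have h2 := conj_b_pow ha hb k
  have h3 := conj_ab_pow ha hb k
  calc ((a * b) ^ k)⁻¹ * (b * (a * b)) * (a * b) ^ k
      = (((a * b) ^ k)⁻¹ * b * (a * b) ^ k) *
          (((a * b) ^ k)⁻¹ * (a * b) * (a * b) ^ k) := by group
    _ = b * (a * b) ^ (2 * k) * (a * b) := by rw [h2, h3]
    _ = b * ((a * b) ^ (2 * k) * (a * b)) := by rw [mul_assoc]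
    _ = b * (a * b) ^ (2 * k + 1) := by rw [← pow_succ]

open Classical in
lemma ePerm_mul_pow (k : ℕ) (t : W) (ε : ℤˣ) :
    ((ePerm a * ePerm b) ^ k) (t, ε) =
      ((a * b) ^ k * t * ((a * b) ^ k)⁻¹,
        ε * ∏ q ∈ Finset.range (2 * k), (if t = b * (a * b) ^ q then (-1 : ℤˣ) else 1)) := by
  induction k with
  | zero => simp
  | succ k ih =>
    have hb' : b⁻¹ = b := inv_a hb ha
    have cond1 : (a * b) ^ k * t * ((a * b) ^ k)⁻¹ = b ↔ t = b * (a * b) ^ (2 * k) := by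
      rw [← conj_b_pow ha hb k]
      constructor
      · intro h
        calc t = ((a * b) ^ k)⁻¹ * ((a * b) ^ k * t * ((a * b) ^ k)⁻¹) * (a * b) ^ k := by
              group
          _ = ((a * b) ^ k)⁻¹ * b * (a * b) ^ k := by rw [h]
      · intro h; rw [h]; group
    have cond2 : b * ((a * b) ^ k * t * ((a * b) ^ k)⁻¹) * b⁻¹ = a ↔
        t = b * (a * b) ^ (2 * k + 1) := by
      rw [← conj_bab_pow ha hb k]
      constructor
      · intro h
        calc t = ((a * b) ^ k)⁻¹ * (b⁻¹ * (b * ((a * b) ^ k * t * ((a * b) ^ k)⁻¹) * b⁻¹) * b)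
              * (a * b) ^ k := by group
          _ = ((a * b) ^ k)⁻¹ * (b⁻¹ * a * b) * (a * b) ^ k := by rw [h]
          _ = ((a * b) ^ k)⁻¹ * (b * (a * b)) * (a * b) ^ k := by
              rw [hb', mul_assoc b a b]
      · intro h
        rw [h]
        calc b * ((a * b) ^ k * (((a * b) ^ k)⁻¹ * (b * (a * b)) * (a * b) ^ k)
              * ((a * b) ^ k)⁻¹) * b⁻¹
            = b * (b * (a * b)) * b⁻¹ := by group
          _ = (b * b) * a * (b * b⁻¹) := by group
          _ = a := by rw [hb, mul_inv_cancel]; group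
    have hprod : 2 * (k + 1) = (2 * k) + 1 + 1 := by ring
    rw [pow_succ' (ePerm a * ePerm b) k, Equiv.Perm.mul_apply, ih, Equiv.Perm.mul_apply,
      ePerm_apply, ePerm_apply, hprod, Finset.prod_range_succ, Finset.prod_range_succ]
    rw [Prod.ext_iff]
    dsimp only
    constructor
    · rw [pow_succ' (a * b) k]
      simp only [mul_inv_rev, mul_assoc]
    · simp only [cond1, cond2]
      by_cases h1 : t = b * (a * b) ^ (2 * k) <;> by_cases h2 : t = b * (a * b) ^ (2 * k + 1) <;>
        simp [h1, h2, mul_assoc]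

end invol



lemma conj_eq_iff (x u v : W) : x * u * x⁻¹ = v ↔ u = x⁻¹ * v * x := by
  constructor
  · intro h; rw [← h]; group
  · intro h; rw [h]; group

/-- sign of a list relative to an element -/
noncomputable def wsign (t : W) (l : List W) : ℤˣ :=
  (l.map (fun x => letI := Classical.dec (t = x); if t = x then (-1 : ℤˣ) else 1)).prod

@[simp] lemma wsign_nil (t : W) : wsign t ([] : List W) = 1 := rfl

open Classical in
lemma wsign_cons (t x : W) (l : List W) :
    wsign t (x :: l) = (if t = x then (-1 : ℤˣ) else 1) * wsign t l := by
  simp [wsign]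

lemma wsign_of_not_mem {t : W} {l : List W} (h : t ∉ l) : wsign t l = 1 := by
  induction l with
  | nil => rfl
  | cons x l ih =>
    rw [wsign_cons]
    have h1 : t ≠ x := fun hh => h (hh ▸ (List.mem_cons_self (a := x) (l := l)))
    have h2 : t ∉ l := fun hh => h (List.mem_cons_of_mem x hh)
    rw [if_neg h1, ih h2, one_mul]

lemma wsign_of_mem_nodup {t : W} {l : List W} (hd : l.Nodup) (h : t ∈ l) :
    wsign t l = -1 := by
  induction l with
  | nil => simp at h
  | cons x l ih =>
    rw [wsign_cons]
    rcases List.mem_cons.mp h with h1 | h1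
    · have : t ∉ l := h1 ▸ (List.nodup_cons.mp hd).1
      rw [if_pos h1, wsign_of_not_mem this, mul_one]
    · have h2 : t ≠ x := by
        rintro rfl; exact (List.nodup_cons.mp hd).1 h1
      rw [if_neg h2, ih (List.nodup_cons.mp hd).2 h1, one_mul]

section Cox

open CoxeterSystem

variable {B : Type*} {M : CoxeterMatrix B} (cs : CoxeterSystem M W)

local prefix:100 "s" => cs.simple
local prefix:100 "π" => cs.wordProd
local prefix:100 "ℓ" => cs.length
local prefix:100 "ris" => cs.rightInvSeq

lemma ris_cons (i : B) (ω : List B) :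
    ris (i :: ω) = ((π ω)⁻¹ * s i * π ω) :: ris ω := rfl

open Classical in
lemma liftable : M.IsLiftable (fun i => ePerm (s i)) := by
  intro i j
  apply Equiv.ext
  rintro ⟨t, ε⟩
  have ha : s i * s i = 1 := cs.simple_mul_simple_self i
  have hb : s j * s j = 1 := cs.simple_mul_simple_self j
  rw [ePerm_mul_pow ha hb (M i j) t ε]
  have hpow : (s i * s j) ^ M i j = 1 := cs.simple_mul_simple_pow i j
  have hsign : (∏ q ∈ Finset.range (2 * M i j),
      (if t = s j * (s i * s j) ^ q then (-1 : ℤˣ) else 1)) = 1 := by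
    rw [two_mul, Finset.prod_range_add]
    have heq : ∀ q ∈ Finset.range (M i j),
        (if t = s j * (s i * s j) ^ (M i j + q) then (-1 : ℤˣ) else 1)
        = (if t = s j * (s i * s j) ^ q then (-1 : ℤˣ) else 1) := by
      intro q _
      rw [pow_add, hpow, one_mul]
    rw [Finset.prod_congr rfl heq, ← Finset.prod_mul_distrib]
    have : ∀ q ∈ Finset.range (M i j),
        (if t = s j * (s i * s j) ^ q then (-1 : ℤˣ) else 1) *
          (if t = s j * (s i * s j) ^ q then (-1 : ℤˣ) else 1) = 1 := by
      intro q _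
      by_cases h : t = s j * (s i * s j) ^ q <;> simp [h]
    rw [Finset.prod_congr rfl this, Finset.prod_const_one]
  rw [hpow, hsign, mul_one]
  simp

noncomputable def phi : W →* Equiv.Perm (W × ℤˣ) :=
  cs.lift ⟨fun i => ePerm (s i), liftable cs⟩

lemma phi_simple (i : B) : phi cs (s i) = ePerm (s i) :=
  cs.lift_apply_simple (liftable cs) i

lemma phi_wordProd (ω : List B) (t : W) (ε : ℤˣ) :
    phi cs (π ω) (t, ε) = (π ω * t * (π ω)⁻¹, ε * wsign t (ris ω)) := by
  classical
  induction ω with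
  | nil => simp [wordProd_nil]
  | cons i ω ih =>
    rw [cs.wordProd_cons, map_mul, Equiv.Perm.mul_apply, ih, phi_simple, ePerm_apply,
      ris_cons, wsign_cons]
    have hcond : π ω * t * (π ω)⁻¹ = s i ↔ t = (π ω)⁻¹ * s i * π ω := conj_eq_iff _ _ _
    rw [Prod.ext_iff]
    dsimp only
    constructor
    · simp only [mul_inv_rev, mul_assoc]
    · simp only [hcond]
      by_cases h : t = (π ω)⁻¹ * s i * π ω <;> simp [h, mul_assoc]

/-- The sign cocycle. -/
noncomputable def eta (w t : W) : ℤˣ := (phi cs w (t, 1)).2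

lemma phi_apply (w t : W) (ε : ℤˣ) :
    phi cs w (t, ε) = (w * t * w⁻¹, ε * eta cs w t) := by
  obtain ⟨ω, -, rfl⟩ := cs.exists_reduced_word w
  rw [phi_wordProd]
  have : eta cs (π ω) t = wsign t (ris ω) := by
    rw [eta, phi_wordProd, one_mul]
  rw [this]

lemma eta_wordProd (ω : List B) (t : W) : eta cs (π ω) t = wsign t (ris ω) := by
  rw [eta, phi_wordProd, one_mul]

lemma eta_mul (x y t : W) : eta cs (x * y) t = eta cs y t * eta cs x (y * t * y⁻¹) := by
  have h1 : phi cs (x * y) (t, 1) = phi cs x (phi cs y (t, 1)) := by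
    rw [map_mul, Equiv.Perm.mul_apply]
  have h2 : phi cs y (t, 1) = (y * t * y⁻¹, eta cs y t) := by
    rw [phi_apply, one_mul]
  rw [eta, h1, h2, phi_apply]

lemma eta_one (t : W) : eta cs 1 t = 1 := by
  have := eta_wordProd cs [] t
  simpa [cs.wordProd_nil] using this

lemma eta_inv (x t : W) : eta cs x⁻¹ t = eta cs x (x⁻¹ * t * x) := by
  have h := eta_mul cs x x⁻¹ t
  rw [mul_inv_cancel, eta_one, inv_inv] at h
  rcases Int.units_eq_one_or (eta cs x⁻¹ t) with h1 | h1 <;>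
    rcases Int.units_eq_one_or (eta cs x (x⁻¹ * t * x)) with h2 | h2 <;>
      rw [h1, h2] <;> first | rfl | (rw [h1, h2] at h; simp at h)

lemma eta_simple_self (i : B) : eta cs (s i) (s i) = -1 := by
  have h := eta_wordProd cs [i] (s i)
  rw [cs.wordProd_singleton] at h
  rw [h]
  have : ris [i] = [s i] := cs.rightInvSeq_singleton i
  rw [this, wsign_of_mem_nodup (by simp) (by simp)]

lemma eta_refl_self {t : W} (ht : cs.IsReflection t) : eta cs t t = -1 := by
  obtain ⟨v, i, rfl⟩ := ht
  set t := v * s i * v⁻¹ with hdef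
  have h1 : t = v * (s i * v⁻¹) := by rw [hdef, mul_assoc]
  have h2 : eta cs t t = eta cs (s i * v⁻¹) t * eta cs v ((s i * v⁻¹) * t * (s i * v⁻¹)⁻¹) := by
    nth_rewrite 1 [h1]
    exact eta_mul cs v (s i * v⁻¹) t
  have h3 : (s i * v⁻¹) * t * (s i * v⁻¹)⁻¹ = s i := by rw [hdef]; group
  have h4 : eta cs (s i * v⁻¹) t = eta cs v⁻¹ t * eta cs (s i) (v⁻¹ * t * v) := by
    have := eta_mul cs (s i) v⁻¹ t
    rwa [inv_inv] at this
  have h5 : v⁻¹ * t * v = s i := by rw [hdef]; group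
  have h6 : eta cs v⁻¹ t = eta cs v (s i) := by rw [eta_inv, h5]
  rw [h2, h3, h4, h5, h6, eta_simple_self]
  rcases Int.units_eq_one_or (eta cs v (s i)) with h7 | h7 <;> rw [h7] <;> decide

lemma lt_iff_eta_neg {t : W} (ht : cs.IsReflection t) (w : W) :
    ℓ (w * t) < ℓ w ↔ eta cs w t = -1 := by
  constructor
  · intro hlt
    by_contra hne
    have h1 : eta cs w t = 1 := (Int.units_eq_one_or _).resolve_right hne
    have h2 : eta cs (w * t) t = -1 := by
      rw [eta_mul cs w t t]
      have : t * t * t⁻¹ = t := by group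
      rw [this, eta_refl_self cs ht, h1, mul_one]
    -- apply the reverse direction to w * t
    obtain ⟨ω, hred, hw⟩ := cs.exists_reduced_word' (w * t)
    rw [hw, eta_wordProd] at h2
    have hmem : t ∈ ris ω := by
      by_contra hmem
      rw [wsign_of_not_mem hmem] at h2
      simp at h2
    have h3 := (cs.isRightInversion_of_mem_rightInvSeq hred hmem).2
    rw [← hw] at h3
    rw [mul_assoc, ht.mul_self, mul_one] at h3
    omega
  · intro hη
    obtain ⟨ω, hred, hw⟩ := cs.exists_reduced_word' w
    rw [hw, eta_wordProd] at hη
    have hmem : t ∈ ris ω := by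
      by_contra hmem
      rw [wsign_of_not_mem hmem] at hη
      simp at hη
    have h3 := (cs.isRightInversion_of_mem_rightInvSeq hred hmem).2
    rw [← hw] at h3
    exact h3

lemma lt_mul_of_eta_pos {t : W} (ht : cs.IsReflection t) {w : W} (h : eta cs w t = 1) :
    ℓ w < ℓ (w * t) := by
  have h1 : ¬ ℓ (w * t) < ℓ w := by
    rw [lt_iff_eta_neg cs ht, h]
    decide
  have h2 : ℓ (w * t) ≠ ℓ w := ht.length_mul_left_ne w
  omega

lemma mem_ris_of_inversion {ω : List B} (hred : cs.IsReduced ω) {t : W}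
    (ht : cs.IsReflection t) (hlt : ℓ (π ω * t) < ℓ (π ω)) : t ∈ ris ω := by
  have hη := (lt_iff_eta_neg cs ht (π ω)).mp hlt
  rw [eta_wordProd] at hη
  by_contra hmem
  rw [wsign_of_not_mem hmem] at hη
  simp at hη

end Cox
section Parab

open CoxeterSystem

variable {B : Type*} {M : CoxeterMatrix B} (cs : CoxeterSystem M W)

local prefix:100 "s" => cs.simple
local prefix:100 "π" => cs.wordProd
local prefix:100 "ℓ" => cs.length
local prefix:100 "ris" => cs.rightInvSeq

variable (K : Set B)

lemma wordProd_mem_closure {ω : List B} (h : ∀ i ∈ ω, i ∈ K) :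
    π ω ∈ Subgroup.closure (cs.simple '' K) := by
  induction ω with
  | nil => rw [cs.wordProd_nil]; exact Subgroup.one_mem _
  | cons i ω ih =>
    rw [cs.wordProd_cons]
    exact Subgroup.mul_mem _
      (Subgroup.subset_closure ⟨i, h i (List.mem_cons_self (a := i) (l := ω)), rfl⟩)
      (ih fun j hj => h j (List.mem_cons_of_mem i hj))

lemma exists_word_of_mem_closure {u : W} (hu : u ∈ Subgroup.closure (cs.simple '' K)) :
    ∃ ω : List B, (∀ i ∈ ω, i ∈ K) ∧ π ω = u := by
  induction hu using Subgroup.closure_induction with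
  | mem x hx =>
    obtain ⟨i, hi, rfl⟩ := hx
    exact ⟨[i], by simpa using hi, cs.wordProd_singleton i⟩
  | one => exact ⟨[], by simp, cs.wordProd_nil⟩
  | mul x y hx hy ihx ihy =>
    obtain ⟨ω₁, h1, rfl⟩ := ihx
    obtain ⟨ω₂, h2, rfl⟩ := ihy
    exact ⟨ω₁ ++ ω₂, by
      intro i hi
      rcases List.mem_append.mp hi with h | h
      exacts [h1 i h, h2 i h], cs.wordProd_append ω₁ ω₂⟩
  | inv x hx ih =>
    obtain ⟨ω, h1, rfl⟩ := ih
    exact ⟨ω.reverse, fun i hi => h1 i (List.mem_reverse.mp hi), cs.wordProd_reverse ω⟩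

lemma ris_mem_closure {ω : List B} (h : ∀ i ∈ ω, i ∈ K) :
    ∀ t ∈ ris ω, t ∈ Subgroup.closure (cs.simple '' K) := by
  induction ω with
  | nil => simp
  | cons i ω ih =>
    rw [ris_cons]
    intro t ht
    rcases List.mem_cons.mp ht with h1 | h1
    · subst h1
      have hπ : π ω ∈ Subgroup.closure (cs.simple '' K) :=
        wordProd_mem_closure cs K (fun j hj => h j (List.mem_cons_of_mem i hj))
      exact Subgroup.mul_mem _ (Subgroup.mul_mem _ (Subgroup.inv_mem _ hπ)
        (Subgroup.subset_closure ⟨i, h i (List.mem_cons_self (a := i) (l := ω)), rfl⟩)) hπ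
    · exact ih (fun j hj => h j (List.mem_cons_of_mem i hj)) t h1

lemma isReduced_nil : cs.IsReduced ([] : List B) := by
  show ℓ (π []) = 0
  rw [cs.wordProd_nil, cs.length_one]

lemma exists_reduced_word_over :
    ∀ (N : ℕ) (ω : List B), ω.length ≤ N → (∀ i ∈ ω, i ∈ K) →
      ∃ κ : List B, (∀ i ∈ κ, i ∈ K) ∧ cs.IsReduced κ ∧ π κ = π ω := by
  intro N
  induction N with
  | zero =>
    intro ω hlen _
    rw [Nat.le_zero, List.length_eq_zero_iff] at hlen
    subst hlen
    exact ⟨[], by simp, isReduced_nil cs, rfl⟩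
  | succ N ihN =>
    intro ω hlen hK
    by_cases hred : cs.IsReduced ω
    · exact ⟨ω, hK, hred, rfl⟩
    classical
    have hex : ∃ n, ¬ cs.IsReduced (ω.take n) := ⟨ω.length, by rwa [List.take_length]⟩
    have hn := Nat.find_spec hex
    have hn0 : Nat.find hex ≠ 0 := by
      intro h
      rw [h] at hn
      exact hn (by simpa using isReduced_nil cs)
    obtain ⟨m, hm⟩ := Nat.exists_eq_succ_of_ne_zero hn0
    have hmred : cs.IsReduced (ω.take m) := by
      by_contra hcon
      exact Nat.find_min hex (hm ▸ m.lt_succ_self) hcon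
    have hmlt : m < ω.length := by
      by_contra hcon
      push_neg at hcon
      rw [List.take_of_length_le hcon] at hmred
      exact hred hmred
    have htake : ω.take (m + 1) = ω.take m ++ [ω.get ⟨m, hmlt⟩] := by
      rw [← List.take_concat_get (l := ω) (i := m) hmlt, List.concat_eq_append]
      rfl
    set i := ω.get ⟨m, hmlt⟩ with hi
    set κ := ω.take m with hκ
    have hκK : ∀ j ∈ κ, j ∈ K := fun j hj => hK j (List.mem_of_mem_take hj)
    have hκlen : κ.length = m := by
      rw [hκ, List.length_take]
      omega
    have hℓκ : ℓ (π κ) = m := by rw [hmred]; exact hκlen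
    have hnred : ¬ cs.IsReduced (κ ++ [i]) := by
      have hm' : Nat.find hex = m + 1 := hm
      rw [← htake, ← hm']
      exact hn
    have hπtake : π (κ ++ [i]) = π κ * s i := by
      rw [cs.wordProd_append, cs.wordProd_singleton]
    have hlt : ℓ (π κ * s i) < ℓ (π κ) := by
      rcases cs.length_mul_simple (π κ) i with h | h
      · exfalso
        apply hnred
        show ℓ (π (κ ++ [i])) = (κ ++ [i]).length
        rw [hπtake, h, hℓκ, List.length_append, hκlen]
        simp
      · omega
    have hsi : s i ∈ ris κ :=
      mem_ris_of_inversion cs hmred (cs.isReflection_simple i) hlt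
    obtain ⟨l, hl, hget⟩ := List.mem_iff_getElem.mp hsi
    have herase : π κ * s i = π (κ.eraseIdx l) := by
      have h := cs.wordProd_mul_getD_rightInvSeq κ l
      rwa [List.getD_eq_getElem _ _ hl, hget] at h
    have hll : l < m := by
      have := hl
      rwa [cs.length_rightInvSeq, hκlen] at this
    set ω' := κ.eraseIdx l ++ ω.drop (m + 1) with hω'
    have hπ' : π ω' = π ω := by
      conv_rhs => rw [← List.take_append_drop (m + 1) ω]
      rw [hω', cs.wordProd_append, cs.wordProd_append, htake, hπtake, herase]
    have hK' : ∀ j ∈ ω', j ∈ K := by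
      intro j hj
      rcases List.mem_append.mp hj with h | h
      · exact hκK j (List.mem_of_mem_eraseIdx h)
      · exact hK j (List.mem_of_mem_drop h)
    have hlen' : ω'.length ≤ N := by
      rw [hω', List.length_append, List.length_eraseIdx_of_lt (by omega), hκlen,
        List.length_drop]
      omega
    obtain ⟨κ', h1, h2, h3⟩ := ihN ω' hlen' hK'
    exact ⟨κ', h1, h2, h3.trans hπ'⟩

lemma exists_reduced_word_over' {u : W} (hu : u ∈ Subgroup.closure (cs.simple '' K)) :
    ∃ κ : List B, (∀ i ∈ κ, i ∈ K) ∧ cs.IsReduced κ ∧ π κ = u := by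
  obtain ⟨ω, hω, rfl⟩ := exists_word_of_mem_closure cs K hu
  exact exists_reduced_word_over cs K ω.length ω le_rfl hω

lemma mem_image_of_length_one {u : W} (hu : u ∈ Subgroup.closure (cs.simple '' K))
    (h1 : ℓ u = 1) : u ∈ cs.simple '' K := by
  obtain ⟨κ, hκK, hκred, rfl⟩ := exists_reduced_word_over' cs K hu
  have hκlen : κ.length = 1 := by rw [← hκred]; exact h1
  obtain ⟨i, rfl⟩ := List.length_eq_one_iff.mp hκlen
  exact ⟨i, hκK i (by simp), (cs.wordProd_singleton i).symm⟩

lemma length_eq_zero_imp_one {u : W} (h : ℓ u = 0) : u = 1 := cs.length_eq_zero_iff.mp h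

lemma additive_aux {w : W}
    (hw : ∀ t : W, cs.IsReflection t → t ∈ Subgroup.closure (cs.simple '' K) →
      ℓ w < ℓ (w * t)) :
    ∀ κ : List B, (∀ i ∈ κ, i ∈ K) → cs.IsReduced κ → ℓ (w * π κ) = ℓ w + κ.length := by
  intro κ
  induction κ using List.reverseRecOn with
  | nil => intro _ _; simp [cs.wordProd_nil]
  | append_singleton κ i ih =>
    intro hK hred
    have hredκ : cs.IsReduced κ := by
      have := hred.take κ.length
      rwa [List.take_left] at this
    have hKκ : ∀ j ∈ κ, j ∈ K := fun j hj => hK j (List.mem_append_left _ hj)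
    have ihv := ih hKκ hredκ
    have hπ : π (κ ++ [i]) = π κ * s i := by
      rw [cs.wordProd_append, cs.wordProd_singleton]
    have hℓκ : ℓ (π κ) = κ.length := hredκ
    have h2 : ℓ (π κ * s i) = ℓ (π κ) + 1 := by
      have h3 : ℓ (π (κ ++ [i])) = (κ ++ [i]).length := hred
      rw [hπ, List.length_append] at h3
      simp only [List.length_singleton] at h3
      omega
    have hηκ : eta cs (π κ) (s i) = 1 := by
      rcases Int.units_eq_one_or (eta cs (π κ) (s i)) with h | h
      · exact h
      · exfalso
        have := (lt_iff_eta_neg cs (cs.isReflection_simple i) (π κ)).mpr h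
        omega
    by_cases hc : ℓ (w * π κ * s i) < ℓ (w * π κ)
    · exfalso
      have hη : eta cs (w * π κ) (s i) = -1 :=
        (lt_iff_eta_neg cs (cs.isReflection_simple i) _).mp hc
      have hco := eta_mul cs w (π κ) (s i)
      rw [hη, hηκ, one_mul] at hco
      have hrefl : cs.IsReflection (π κ * s i * (π κ)⁻¹) :=
        (cs.isReflection_simple i).conj (π κ)
      have hmem : (π κ * s i * (π κ)⁻¹) ∈ Subgroup.closure (cs.simple '' K) := by
        have hπm : π κ ∈ Subgroup.closure (cs.simple '' K) := wordProd_mem_closure cs K hKκ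
        exact Subgroup.mul_mem _ (Subgroup.mul_mem _ hπm
          (Subgroup.subset_closure ⟨i, hK i (by simp), rfl⟩)) (Subgroup.inv_mem _ hπm)
      have hgt := hw _ hrefl hmem
      have hlt' : ℓ (w * (π κ * s i * (π κ)⁻¹)) < ℓ w :=
        (lt_iff_eta_neg cs hrefl w).mpr hco.symm
      omega
    · rcases cs.length_mul_simple (w * π κ) i with h | h
      · rw [hπ, ← mul_assoc, h, ihv, List.length_append]
        simp only [List.length_singleton]
        omega
      · exfalso; omega

/-- Key additivity lemma -/
lemma additive {w : W}
    (hw : ∀ t : W, cs.IsReflection t → t ∈ Subgroup.closure (cs.simple '' K) →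
      ℓ w < ℓ (w * t)) :
    ∀ u ∈ Subgroup.closure (cs.simple '' K), ℓ (w * u) = ℓ w + ℓ u := by
  intro u hu
  obtain ⟨κ, hκK, hκred, rfl⟩ := exists_reduced_word_over' cs K hu
  have hh : ℓ (π κ) = κ.length := hκred
  rw [hh]
  exact additive_aux cs K hw κ hκK hκred

lemma min_imp_additive {w : W}
    (hmin : ∀ u ∈ Subgroup.closure (cs.simple '' K), ℓ w ≤ ℓ (w * u)) :
    ∀ u ∈ Subgroup.closure (cs.simple '' K), ℓ (w * u) = ℓ w + ℓ u := by
  apply additive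
  intro t ht htc
  have h1 : ℓ w ≤ ℓ (w * t) := hmin t htc
  have h2 : ℓ (w * t) ≠ ℓ w := ht.length_mul_left_ne w
  omega

lemma eta_eq_one_of_min {w : W}
    (hmin : ∀ u ∈ Subgroup.closure (cs.simple '' K), ℓ w ≤ ℓ (w * u))
    {t : W} (ht : cs.IsReflection t) (htc : t ∈ Subgroup.closure (cs.simple '' K)) :
    eta cs w t = 1 := by
  rcases Int.units_eq_one_or (eta cs w t) with h | h
  · exact h
  · exfalso
    have h1 := (lt_iff_eta_neg cs ht w).mpr h
    have h2 := hmin t htc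
    omega

end Parab
section Assemble

open CoxeterSystem

variable {B : Type*} {M : CoxeterMatrix B} (cs : CoxeterSystem M W)

lemma norm_iff (x : W) (H : Subgroup W) :
    ((fun u => x * u * x⁻¹) '' (H : Set W) = (H : Set W)) ↔
      ((∀ u ∈ H, x * u * x⁻¹ ∈ H) ∧ (∀ u ∈ H, x⁻¹ * u * x ∈ H)) := by
  constructor
  · intro h
    constructor
    · intro u hu
      have : x * u * x⁻¹ ∈ (fun u => x * u * x⁻¹) '' (H : Set W) :=
        Set.mem_image_of_mem _ hu
      rwa [h] at this
    · intro u hu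
      have hu' : u ∈ (fun u => x * u * x⁻¹) '' (H : Set W) := by
        rw [h]; exact hu
      obtain ⟨v, hv, hvu⟩ := hu'
      have : v = x⁻¹ * u * x := by rw [← hvu]; group
      rwa [← this]
  · rintro ⟨h1, h2⟩
    apply Set.Subset.antisymm
    · rintro _ ⟨u, hu, rfl⟩
      exact h1 u hu
    · intro y hy
      exact ⟨x⁻¹ * y * x, h2 y hy, by group⟩

lemma conj_image_closure (x : W) (S : Set W) :
    (fun u => x * u * x⁻¹) '' ((Subgroup.closure S : Subgroup W) : Set W)
      = ((Subgroup.closure ((fun v => x * v * x⁻¹) '' S) : Subgroup W) : Set W) := by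
  have h : (fun u : W => x * u * x⁻¹) = ⇑((MulAut.conj x).toMonoidHom) := by
    funext u
    simp
  rw [h, ← Subgroup.coe_map, MonoidHom.map_closure]

lemma exists_subgroup_of (X : Set W) (h1 : (1 : W) ∈ X)
    (hmul : ∀ x y : W, x ∈ X → y ∈ X → x * y ∈ X)
    (hinv : ∀ x : W, x ∈ X → x⁻¹ ∈ X) : ∃ H : Subgroup W, (H : Set W) = X :=
  ⟨{ carrier := X, one_mem' := h1, mul_mem' := fun ha hb => hmul _ _ ha hb,
     inv_mem' := fun ha => hinv _ ha }, rfl⟩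

end Assemble

end Stmt1Aux

open Stmt1Aux

/-- Let `(W,S)` be a finite Coxeter system with length function `ℓ`,
`J ⊆ S`, and for `w ∈ W` let `wJ w` denote the (an) element of minimal length in the
double coset `W_J w W_J`.  Let `NW_J` be the normalizer of `W_J` in `W` and let
`𝒲_J` be the set of elements of `NW_J` of minimal length in their coset `w W_J`.
Set `^JW = {w : ℓ(yw) = ℓ(y) + ℓ(w) ∀ y ∈ W_J}` and
`^J_*W = {w ∈ ^JW : (wJ w) J (wJ w)⁻¹ = J}`.
Then `𝒲_J` is a subgroup of `W` and `^J_*W = 𝒲_J`. -/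
theorem stmt1 {B : Type*} {W : Type*} [Group W] [Finite W] {M : CoxeterMatrix B}
    (cs : CoxeterSystem M W)
    (J : Set W) (hJ : J ⊆ Set.range cs.simple)
    (wJ : W → W)
    (hwJmem : ∀ w : W, ∃ y ∈ Subgroup.closure J, ∃ z ∈ Subgroup.closure J, wJ w = y * w * z)
    (hwJmin : ∀ w : W, ∀ y ∈ Subgroup.closure J, ∀ z ∈ Subgroup.closure J,
      cs.length (wJ w) ≤ cs.length (y * w * z))
    -- the normalizer of `W_J` in `W`
    (NWJ : Set W) (hNWJ : NWJ = {w : W | (fun u => w * u * w⁻¹) '' (Subgroup.closure J : Set W)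
      = (Subgroup.closure J : Set W)})
    -- `𝒲_J`: elements of the normalizer of minimal length in their `W_J`-coset
    (WWJ : Set W) (hWWJ : WWJ = {w ∈ NWJ | ∀ u ∈ Subgroup.closure J, cs.length w ≤ cs.length (w * u)})
    -- `^JW`
    (JW : Set W) (hJW : JW = {w : W | ∀ y ∈ Subgroup.closure J,
      cs.length (y * w) = cs.length y + cs.length w})
    -- `^J_*W`
    (JWstar : Set W) (hJWstar : JWstar = {w ∈ JW | (fun s => (wJ w) * s * (wJ w)⁻¹) '' J = J}) :
    (∃ H : Subgroup W, (H : Set W) = WWJ) ∧ JWstar = WWJ := by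
  subst hNWJ hWWJ hJW hJWstar
  set S := Subgroup.closure J with hS
  -- J as image of simple reflections
  set K : Set B := {i : B | cs.simple i ∈ J} with hK
  have hKJ : cs.simple '' K = J := by
    apply Set.Subset.antisymm
    · rintro _ ⟨i, hi, rfl⟩
      exact hi
    · intro t ht
      obtain ⟨i, rfl⟩ := hJ ht
      exact ⟨i, ht, rfl⟩
  have hclos : Subgroup.closure (cs.simple '' K) = S := by rw [hKJ]
  -- main derived facts
  have fact1 : ∀ x : W, (∀ u ∈ S, cs.length x ≤ cs.length (x * u)) →
      ∀ u ∈ S, cs.length (x * u) = cs.length x + cs.length u := by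
    intro x hx
    have := min_imp_additive cs K (w := x) (by rw [hclos]; exact hx)
    rwa [hclos] at this
  have etaone : ∀ x : W, (∀ u ∈ S, cs.length x ≤ cs.length (x * u)) →
      ∀ t : W, cs.IsReflection t → t ∈ S → eta cs x t = 1 := by
    intro x hx t ht htS
    exact eta_eq_one_of_min cs K (w := x) (by rw [hclos]; exact hx) ht (by rw [hclos]; exact htS)
  have addmin : ∀ x : W,
      (∀ t : W, cs.IsReflection t → t ∈ S → eta cs x t = 1) →
      (∀ u ∈ S, cs.length x ≤ cs.length (x * u)) := by
    intro x hx u hu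
    have := additive cs K (w := x) ?_ u (by rw [hclos]; exact hu)
    · omega
    · intro t ht htS
      exact lt_mul_of_eta_pos cs ht (hx t ht (by rw [← hclos]; exact htS))
  have minInv : ∀ x : W, ((fun u => x * u * x⁻¹) '' (S : Set W) = (S : Set W)) →
      (∀ u ∈ S, cs.length x ≤ cs.length (x * u)) →
      (∀ u ∈ S, cs.length x⁻¹ ≤ cs.length (x⁻¹ * u)) := by
    intro x hN hMin u hu
    obtain ⟨-, nb⟩ := (norm_iff x S).mp hN
    have hv : x⁻¹ * u⁻¹ * x ∈ S := nb u⁻¹ (Subgroup.inv_mem _ hu)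
    have h1 : x⁻¹ * u = (x * (x⁻¹ * u⁻¹ * x))⁻¹ := by group
    have h2 : cs.length (x⁻¹ * u) = cs.length (x * (x⁻¹ * u⁻¹ * x)) := by
      rw [h1, cs.length_inv]
    have h3 := hMin _ hv
    rw [cs.length_inv] at *
    omega
  -- minimality implies left-additivity (JW membership)
  have leftAdd : ∀ x : W, ((fun u => x * u * x⁻¹) '' (S : Set W) = (S : Set W)) →
      (∀ u ∈ S, cs.length x ≤ cs.length (x * u)) →
      ∀ y ∈ S, cs.length (y * x) = cs.length y + cs.length x := by
    intro x hN hMin y hy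
    have hMinInv := minInv x hN hMin
    have hadd := fact1 x⁻¹ (by
      intro u hu
      have := hMinInv u hu
      omega) y⁻¹ (Subgroup.inv_mem _ hy)
    have h1 : cs.length (y * x) = cs.length (x⁻¹ * y⁻¹) := by
      rw [← cs.length_inv (y * x), mul_inv_rev]
    rw [h1, hadd, cs.length_inv, cs.length_inv]
    omega
  constructor
  · -- WWJ is a subgroup
    refine exists_subgroup_of _ ?one ?mul ?inv
    case one =>
      constructor
      · show (fun u => (1 : W) * u * 1⁻¹) '' (S : Set W) = (S : Set W)
        have : (fun u => (1 : W) * u * 1⁻¹) = id := by funext u; simp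
        rw [this, Set.image_id]
      · intro u hu
        simp [cs.length_one]
    case mul =>
      intro x y hx hy
      obtain ⟨hxN, hxMin⟩ := hx
      obtain ⟨hyN, hyMin⟩ := hy
      have hxN' := (norm_iff x S).mp hxN
      have hyN' := (norm_iff y S).mp hyN
      constructor
      · show (fun u => (x * y) * u * (x * y)⁻¹) '' (S : Set W) = (S : Set W)
        rw [norm_iff]
        constructor
        · intro u hu
          have h1 : (x * y) * u * (x * y)⁻¹ = x * (y * u * y⁻¹) * x⁻¹ := by group
          rw [h1]
          exact hxN'.1 _ (hyN'.1 u hu)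
        · intro u hu
          have h1 : (x * y)⁻¹ * u * (x * y) = y⁻¹ * (x⁻¹ * u * x) * y := by group
          rw [h1]
          exact hyN'.2 _ (hxN'.2 u hu)
      · apply addmin
        intro t ht htS
        rw [eta_mul]
        have h1 : eta cs y t = 1 := etaone y hyMin t ht htS
        have h2 : eta cs x (y * t * y⁻¹) = 1 :=
          etaone x hxMin _ (ht.conj y) (hyN'.1 t htS)
        rw [h1, h2, one_mul]
    case inv =>
      intro x hx
      obtain ⟨hxN, hxMin⟩ := hx
      have hxN' := (norm_iff x S).mp hxN
      constructor
      · show (fun u => x⁻¹ * u * x⁻¹⁻¹) '' (S : Set W) = (S : Set W)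
        rw [norm_iff]
        constructor
        · intro u hu
          rw [inv_inv]
          exact hxN'.2 u hu
        · intro u hu
          rw [inv_inv]
          exact hxN'.1 u hu
      · exact minInv x hxN hxMin
  · -- JWstar = WWJ
    ext w
    constructor
    · rintro ⟨hJWmem, himg⟩
      simp only [Set.mem_setOf_eq] at hJWmem
      -- w₀ := wJ w normalizes S
      have h₀ : (fun u => (wJ w) * u * (wJ w)⁻¹) '' (S : Set W) = (S : Set W) := by
        rw [conj_image_closure, himg]
      have h₀' := (norm_iff (wJ w) S).mp h₀
      obtain ⟨y, hy, z, hz, heq⟩ := hwJmem w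
      set u : W := ((wJ w)⁻¹ * y⁻¹ * (wJ w)) * z⁻¹ with hu_def
      have hu : u ∈ S := Subgroup.mul_mem _ (h₀'.2 y⁻¹ (Subgroup.inv_mem _ hy))
        (Subgroup.inv_mem _ hz)
      have hwu : w = (wJ w) * u := by
        rw [hu_def, heq]; group
      have hNw : (fun v => w * v * w⁻¹) '' (S : Set W) = (S : Set W) := by
        rw [norm_iff]
        constructor
        · intro v hv
          have h1 : w * v * w⁻¹ = (wJ w) * (u * v * u⁻¹) * (wJ w)⁻¹ := by
            conv_lhs => rw [hwu]
            group
          rw [h1]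
          exact h₀'.1 _ (Subgroup.mul_mem _ (Subgroup.mul_mem _ hu hv) (Subgroup.inv_mem _ hu))
        · intro v hv
          have h1 : w⁻¹ * v * w = u⁻¹ * ((wJ w)⁻¹ * v * (wJ w)) * u := by
            conv_lhs => rw [hwu]
            group
          rw [h1]
          exact Subgroup.mul_mem _ (Subgroup.mul_mem _ (Subgroup.inv_mem _ hu)
            (h₀'.2 v hv)) hu
      refine ⟨hNw, ?_⟩
      intro v hv
      have hy' : w * v * w⁻¹ ∈ S := ((norm_iff w S).mp hNw).1 v hv
      have h1 : w * v = (w * v * w⁻¹) * w := by group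
      rw [h1, hJWmem _ hy']
      omega
    · rintro ⟨hN, hMin⟩
      have hN' := (norm_iff w S).mp hN
      have fact1w := fact1 w hMin
      have hJWmem : ∀ y ∈ Subgroup.closure J,
          cs.length (y * w) = cs.length y + cs.length w := leftAdd w hN hMin
      -- wJ w = w
      obtain ⟨y, hy, z, hz, heq⟩ := hwJmem w
      set v : W := (w⁻¹ * y * w) * z with hv_def
      have hv : v ∈ S := Subgroup.mul_mem _ (hN'.2 y hy) hz
      have hwv : wJ w = w * v := by rw [hv_def, heq]; group
      have hle : cs.length (wJ w) ≤ cs.length w := by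
        have := hwJmin w 1 (Subgroup.one_mem _) 1 (Subgroup.one_mem _)
        simpa using this
      have hveq : v = 1 := by
        have h2 := fact1w v hv
        rw [hwv] at hle
        have h3 : cs.length v = 0 := by omega
        exact cs.length_eq_zero_iff.mp h3
      have hwJw : wJ w = w := by rw [hwv, hveq, mul_one]
      refine ⟨?_, ?_⟩
      · exact hJWmem
      · -- image of J under conjugation equals J
        rw [hwJw]
        have hmaps : Set.MapsTo (fun t => w * t * w⁻¹) J J := by
          intro t ht
          have htS : t ∈ S := Subgroup.subset_closure ht
          have huS : w * t * w⁻¹ ∈ S := hN'.1 t htS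
          obtain ⟨i, hti⟩ := hJ ht
          have hℓt : cs.length t = 1 := by rw [← hti, cs.length_simple]
          have hℓu : cs.length (w * t * w⁻¹) = 1 := by
            have h1 : (w * t * w⁻¹) * w = w * t := by group
            have h2 : cs.length (w * t) = cs.length w + 1 := by
              rw [fact1w t htS, hℓt]
            have h3 : cs.length ((w * t * w⁻¹) * w)
                = cs.length (w * t * w⁻¹) + cs.length w := hJWmem _ huS
            rw [h1] at h3
            omega
          have := mem_image_of_length_one cs K (by rw [hclos]; exact huS) hℓu
          rw [hKJ] at this
          exact this
        have hinj : Set.InjOn (fun t => w * t * w⁻¹) J := by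
          intro a _ b _ hab
          simp only at hab
          have := mul_right_cancel hab
          exact mul_left_cancel this
        have hbij := (Set.Finite.injOn_iff_bijOn_of_mapsTo (Set.toFinite J) hmaps).mp hinj
        exact hbij.image_eq
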